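/- Let f : ℝ → ℝ be differentiable with non-decreasing derivative f', and let r ≥ 1 be a real number with f(r) ≥ r·f(1). Then f(rx) ≥ r·f(x) for all x ≥ 1. -/

import Mathlib

/-- Let `f : ℝ → ℝ` be differentiable with non-decreasing derivative `f'`,
and let `r ≥ 1` be a real number with `f r ≥ r * f 1`.  Then `f (r * x) ≥ r * f x`
for all `x ≥ 1`. -/
theorem superadditivity_criterion
    (f : ℝ → ℝ) (hf : Differentiable ℝ f) (hf' : Monotone (deriv f))
    (r : ℝ) (hr : 1 ≤ r) (hinit : r * f 1 ≤ f r) :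
    ∀ x : ℝ, 1 ≤ x → r * f x ≤ f (r * x) := by
  intro x hx
  set g : ℝ → ℝ := fun y => f (r * y) - r * f y with hg
  have hgd : ∀ y : ℝ, HasDerivAt g (r * deriv f (r * y) - r * deriv f y) y := by
    intro y
    have h1 : HasDerivAt (fun y : ℝ => f (r * y)) (deriv f (r * y) * r) y := by
      have := ((hf (r * y)).hasDerivAt).comp y ((hasDerivAt_id y).const_mul r)
      simpa [Function.comp_def] using this
    have h2 : HasDerivAt (fun y : ℝ => r * f y) (r * deriv f y) y :=
      ((hf y).hasDerivAt).const_mul r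
    have := h1.sub h2
    rw [mul_comm (deriv f (r * y)) r] at this
    exact this
  have hmono : MonotoneOn g (Set.Ici (1 : ℝ)) := by
    apply monotoneOn_of_deriv_nonneg (convex_Ici 1)
    · exact (Continuous.sub (hf.continuous.comp (continuous_const.mul continuous_id))
        (continuous_const.mul hf.continuous)).continuousOn
    · intro y _
      exact (hgd y).differentiableAt.differentiableWithinAt
    · intro y hy
      rw [(hgd y).deriv]
      have hy1 : (1 : ℝ) ≤ y := le_of_lt (by simpa using hy)
      have : y ≤ r * y := by nlinarith
      have := hf' this
      nlinarith [hf' this]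
  have h1 : g 1 ≤ g x := hmono (by simp) (by simpa using hx) hx
  have : (0 : ℝ) ≤ g 1 := by simp [hg]; linarith
  have := this.trans h1
  simp only [hg] at this
  linarith
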